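/- For Gaussian measures p = N(0, I) and q = N(μ, Σ) on ℝ^d with μ = Φ a and Σ = (I - Φ K⁻¹ Φᵀ) + Φ K⁻¹ S K⁻¹ Φᵀ, where Φ is a d×m matrix with full column rank, K = ΦᵀΦ, and S ≻ 0, the KL divergence is KL(q‖p) = ½( aᵀ K a + tr(S K⁻¹) - log det S + log det K - m ). -/

import Mathlib

open Matrix

/-- KL divergence of the decoupled-basis Gaussian posterior from the standard normal prior,
via the standard formula `KL(N(μ,Σ)‖N(0,I)) = ½(tr Σ + μᵀμ - d - log det Σ)`. -/
theorem stmt4 {d m : ℕ} (Φ : Matrix (Fin d) (Fin m) ℝ)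
    (hΦ : Function.Injective Φ.mulVec)
    (S : Matrix (Fin m) (Fin m) ℝ) (hS : S.PosDef)
    (a : Fin m → ℝ) :
    let K : Matrix (Fin m) (Fin m) ℝ := Φᵀ * Φ
    let μ : Fin d → ℝ := Φ *ᵥ a
    let Sig : Matrix (Fin d) (Fin d) ℝ :=
      (1 : Matrix (Fin d) (Fin d) ℝ) - Φ * K⁻¹ * Φᵀ + Φ * K⁻¹ * S * K⁻¹ * Φᵀ
    (1 / 2 : ℝ) * (Sig.trace + μ ⬝ᵥ μ - d - Real.log Sig.det)
      = (1 / 2 : ℝ) * (a ⬝ᵥ (K *ᵥ a) + (S * K⁻¹).trace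
          - Real.log S.det + Real.log K.det - m) := by
  intro K μ Sig
  -- a helper identity
  have hdotgen : ∀ v : Fin m → ℝ, (Φ *ᵥ v) ⬝ᵥ (Φ *ᵥ v) = v ⬝ᵥ (K *ᵥ v) := by
    intro v
    show (Φ *ᵥ v) ⬝ᵥ (Φ *ᵥ v) = v ⬝ᵥ ((Φᵀ * Φ) *ᵥ v)
    calc (Φ *ᵥ v) ⬝ᵥ (Φ *ᵥ v)
        = (v ᵥ* Φᵀ) ⬝ᵥ (Φ *ᵥ v) := by rw [Matrix.vecMul_transpose]
      _ = v ⬝ᵥ (Φᵀ *ᵥ (Φ *ᵥ v)) := (Matrix.dotProduct_mulVec v Φᵀ (Φ *ᵥ v)).symm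
      _ = v ⬝ᵥ ((Φᵀ * Φ) *ᵥ v) := by rw [Matrix.mulVec_mulVec]
  -- K is positive definite
  have hK : K.PosDef := by
    refine Matrix.posDef_iff_dotProduct_mulVec.mpr ⟨show (Φᵀ * Φ).IsHermitian by
      simpa using Matrix.isHermitian_conjTranspose_mul_self Φ, fun x hx => ?_⟩
    have hΦx : Φ *ᵥ x ≠ 0 := by
      intro h
      exact hx (hΦ (by simpa [Matrix.mulVec_zero] using h))
    have hs : (star x : Fin m → ℝ) = x := rfl
    rw [hs, ← hdotgen x]
    refine lt_of_le_of_ne ?_ (fun h => hΦx (dotProduct_self_eq_zero.mp h.symm))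
    exact Finset.sum_nonneg fun i _ => mul_self_nonneg _
  have hKdet : K.det ≠ 0 := ne_of_gt hK.det_pos
  have hKu : IsUnit K.det := isUnit_iff_ne_zero.mpr hKdet
  have hKinv : K⁻¹ * K = 1 := Matrix.nonsing_inv_mul K hKu
  have hKinv' : K * K⁻¹ = 1 := Matrix.mul_nonsing_inv K hKu
  -- trace computation
  have htr1 : (Φ * K⁻¹ * Φᵀ).trace = (m : ℝ) := by
    rw [Matrix.trace_mul_cycle]
    show (K * K⁻¹).trace = _
    rw [hKinv', Matrix.trace_one]
    simp
  have htr2 : (Φ * K⁻¹ * S * K⁻¹ * Φᵀ).trace = (S * K⁻¹).trace := by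
    rw [Matrix.trace_mul_comm]
    have h : Φᵀ * (Φ * K⁻¹ * S * K⁻¹) = S * K⁻¹ := by
      have e : Φᵀ * (Φ * K⁻¹ * S * K⁻¹) = (Φᵀ * Φ) * K⁻¹ * (S * K⁻¹) := by
        simp only [Matrix.mul_assoc]
      rw [e]
      show K * K⁻¹ * (S * K⁻¹) = _
      rw [hKinv', Matrix.one_mul]
    rw [h]
  have htr : Sig.trace = (d : ℝ) - m + (S * K⁻¹).trace := by
    show ((1 : Matrix (Fin d) (Fin d) ℝ) - Φ * K⁻¹ * Φᵀ + Φ * K⁻¹ * S * K⁻¹ * Φᵀ).trace = _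
    rw [Matrix.trace_add, Matrix.trace_sub, Matrix.trace_one, htr1, htr2]
    simp
  -- dot product computation
  have hdot : μ ⬝ᵥ μ = a ⬝ᵥ (K *ᵥ a) := hdotgen a
  -- determinant computation
  have hdet : Sig.det = S.det / K.det := by
    have hSig : Sig = 1 + Φ * (K⁻¹ * S * K⁻¹ - K⁻¹) * Φᵀ := by
      show (1 : Matrix (Fin d) (Fin d) ℝ) - Φ * K⁻¹ * Φᵀ + Φ * K⁻¹ * S * K⁻¹ * Φᵀ = _
      simp only [Matrix.mul_sub, Matrix.sub_mul, Matrix.mul_assoc]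
      abel
    rw [hSig, Matrix.det_one_add_mul_comm]
    have h3 : Φᵀ * (Φ * (K⁻¹ * S * K⁻¹ - K⁻¹)) = S * K⁻¹ - 1 := by
      rw [← Matrix.mul_assoc]
      show K * (K⁻¹ * S * K⁻¹ - K⁻¹) = _
      rw [Matrix.mul_sub, hKinv',
        show K * (K⁻¹ * S * K⁻¹) = K * K⁻¹ * S * K⁻¹ by noncomm_ring,
        hKinv', Matrix.one_mul]
    rw [h3]
    have h4 : (1 : Matrix (Fin m) (Fin m) ℝ) + (S * K⁻¹ - 1) = S * K⁻¹ := by abel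
    rw [h4, Matrix.det_mul, Matrix.det_nonsing_inv, Ring.inverse_eq_inv', div_eq_mul_inv]
  have hlog : Real.log Sig.det = Real.log S.det - Real.log K.det := by
    rw [hdet, Real.log_div (ne_of_gt hS.det_pos) hKdet]
  rw [htr, hdot, hlog]
  ring
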